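/- Let Ω be homogeneous of degree 0 satisfying the L¹_α-Dini condition (∫₀¹ ω(t)/t^{1+α} dt < ∞, with ω the L¹ integral continuity modulus). Let V be a probability measure supported in B(0,r_t). Then for every fixed ρ > 0 and λ > 0, |{x ∈ B(0,ρ)^c : |x|^{α−n} ∫_{B(0,r_t)} |Ω(x−y) − Ω(x)| dV(y) > λ}| ≤ (1/λ) sup_{y ∈ B(0,r_t)} |y|^α ∫₀^{|y|/ρ} ω(s)/s^{1+α} ds, and in particular this measure tends to 0 as r_t → 0⁺. -/

import Mathlib

open MeasureTheory Metric Set Filter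
open scoped ENNReal Topology

/-- The `L¹` integral continuity modulus of `Ω`. -/
noncomputable def omegaMod (n : ℕ) (Ω : EuclideanSpace ℝ (Fin n) → ℝ) (t : ℝ) : ℝ≥0∞ :=
  ⨆ (h : EuclideanSpace ℝ (Fin n)) (_ : ‖h‖ ≤ t),
    ∫⁻ x' : sphere (0:EuclideanSpace ℝ (Fin n)) 1,
      ENNReal.ofReal |Ω ((x' : EuclideanSpace ℝ (Fin n)) + h) - Ω (x' : EuclideanSpace ℝ (Fin n))|
      ∂(volume : Measure (EuclideanSpace ℝ (Fin n))).toSphere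

section Aux

private abbrev E (n : ℕ) : Type _ := EuclideanSpace ℝ (Fin n)

variable {n : ℕ} {Ω : E n → ℝ}

lemma omegaMod_mono : Monotone (omegaMod n Ω) := fun a b hab =>
  iSup₂_le fun h hh => le_iSup₂_of_le h (hh.trans hab) le_rfl

lemma omegaMod_measurable : Measurable (omegaMod n Ω) :=
  omegaMod_mono.measurable

lemma sphere_le_omegaMod (h : E n) {t : ℝ} (ht : ‖h‖ ≤ t) :
    (∫⁻ x' : sphere (0:E n) 1,
      ENNReal.ofReal |Ω ((x' : E n) + h) - Ω (x' : E n)|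
      ∂(volume : Measure (E n)).toSphere) ≤ omegaMod n Ω t :=
  le_iSup₂_of_le h ht le_rfl

lemma measurable_rpow_const (c : ℝ) : Measurable fun t : ℝ => t ^ c :=
  measurable_of_continuousOn_compl_singleton 0 fun t ht =>
    (Real.continuousAt_rpow_const t c (Or.inl ht)).continuousWithinAt

/-- Polar coordinates for the Lebesgue lintegral on Euclidean space. -/
lemma lintegral_polar (hn : 0 < n) (g : E n → ℝ≥0∞) (hg : Measurable g) :
    ∫⁻ x, g x ∂(volume : Measure (E n)) =
      ∫⁻ r in Ioi (0:ℝ), ENNReal.ofReal (r ^ (n-1)) *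
        ∫⁻ ξ : sphere (0:E n) 1, g (r • (ξ:E n))
          ∂(volume : Measure (E n)).toSphere ∂volume := by
  haveI : Nontrivial (E n) :=
    Module.nontrivial_of_finrank_pos (R := ℝ) (by rw [finrank_euclideanSpace_fin]; exact hn)
  have hd : Module.finrank ℝ (E n) = n := finrank_euclideanSpace_fin
  set G : sphere (0:E n) 1 × Ioi (0:ℝ) → ℝ≥0∞ := fun p => g ((p.2 : ℝ) • (p.1 : E n)) with hGdef
  have hG : Measurable G := hg.comp
    (((continuous_subtype_val.comp continuous_snd).smul
      (continuous_subtype_val.comp continuous_fst)).measurable)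
  have hF : Measurable fun r : Ioi (0:ℝ) =>
      ∫⁻ ξ : sphere (0:E n) 1, G (ξ, r) ∂(volume : Measure (E n)).toSphere :=
    hG.lintegral_prod_left'
  calc ∫⁻ x, g x ∂(volume : Measure (E n))
      = ∫⁻ x in ({0}ᶜ : Set (E n)), g x ∂volume := by
        rw [MeasureTheory.restrict_compl_singleton]
    _ = ∫⁻ x : ({0}ᶜ : Set (E n)), g ↑x ∂((volume : Measure (E n)).comap Subtype.val) :=
        (lintegral_subtype_comap (measurableSet_singleton 0).compl g).symm
    _ = ∫⁻ x : ({0}ᶜ : Set (E n)), G (homeomorphUnitSphereProd (E n) x)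
          ∂((volume : Measure (E n)).comap Subtype.val) := by
        refine lintegral_congr fun x => ?_
        simp only [hGdef, homeomorphUnitSphereProd_apply_fst_coe,
          homeomorphUnitSphereProd_apply_snd_coe]
        rw [smul_inv_smul₀ (norm_ne_zero_iff.2 x.2)]
    _ = ∫⁻ p, G p ∂((volume : Measure (E n)).toSphere.prod
          (Measure.volumeIoiPow (Module.finrank ℝ (E n) - 1))) :=
        ((volume : Measure (E n)).measurePreserving_homeomorphUnitSphereProd).lintegral_comp hG
    _ = ∫⁻ r : Ioi (0:ℝ), ∫⁻ ξ : sphere (0:E n) 1, G (ξ, r) ∂(volume : Measure (E n)).toSphere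
          ∂(Measure.volumeIoiPow (n - 1)) := by
        rw [hd]
        exact MeasureTheory.lintegral_prod_symm G hG.aemeasurable
    _ = ∫⁻ r : Ioi (0:ℝ), ENNReal.ofReal ((r:ℝ) ^ (n-1)) *
          ∫⁻ ξ : sphere (0:E n) 1, G (ξ, r) ∂(volume : Measure (E n)).toSphere
          ∂(Measure.comap Subtype.val volume) := by
        rw [Measure.volumeIoiPow, lintegral_withDensity_eq_lintegral_mul _
          (by exact (measurable_subtype_coe.pow_const _).ennreal_ofReal) hF]
        rfl
    _ = ∫⁻ r in Ioi (0:ℝ), ENNReal.ofReal (r ^ (n-1)) *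
          ∫⁻ ξ : sphere (0:E n) 1, g (r • (ξ:E n)) ∂(volume : Measure (E n)).toSphere ∂volume := by
        exact lintegral_subtype_comap measurableSet_Ioi
          (fun r : ℝ => ENNReal.ofReal (r ^ (n-1)) *
            ∫⁻ ξ : sphere (0:E n) 1, g (r • (ξ:E n)) ∂(volume : Measure (E n)).toSphere)

/-- One-dimensional change of variables for the Lebesgue integral. -/
lemma lintegral_image_eq_lintegral_abs_deriv_mul {s : Set ℝ} {f f' : ℝ → ℝ}
    (hs : MeasurableSet s) (hf' : ∀ x ∈ s, HasDerivWithinAt f (f' x) s x) (hf : InjOn f s)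
    (g : ℝ → ℝ≥0∞) :
    ∫⁻ x in f '' s, g x = ∫⁻ x in s, ENNReal.ofReal |f' x| * g (f x) := by
  simpa only [ContinuousLinearMap.det_toSpanSingleton] using
    lintegral_image_eq_lintegral_abs_det_fderiv_mul volume hs
      (fun x hx => (hf' x hx).hasFDerivWithinAt) hf g

end Aux

section Key

variable {n : ℕ} {Ω : EuclideanSpace ℝ (Fin n) → ℝ}

lemma key_estimate (α : ℝ) (hα0 : 0 ≤ α) (hαn : α < n)
    (hΩhom : ∀ s : ℝ, 0 < s → ∀ x : EuclideanSpace ℝ (Fin n), Ω (s • x) = Ω x)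
    (hΩm : Measurable Ω)
    (y : EuclideanSpace ℝ (Fin n)) (hy : y ≠ 0) {ρ : ℝ} (hρ : 0 < ρ) :
    (∫⁻ x in {x : EuclideanSpace ℝ (Fin n) | ρ < ‖x‖},
        ENNReal.ofReal (‖x‖ ^ (α - (n:ℝ))) * ENNReal.ofReal |Ω (x - y) - Ω x| ∂volume)
      ≤ ENNReal.ofReal (‖y‖ ^ α) *
          ∫⁻ s in Ioo (0:ℝ) (‖y‖ / ρ), omegaMod n Ω s / ENNReal.ofReal (s ^ (1 + α)) := by
  have hn : 0 < n := Nat.cast_pos.mp (hα0.trans_lt hαn)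
  have ha : 0 < ‖y‖ := norm_pos_iff.2 hy
  set S : Set (EuclideanSpace ℝ (Fin n)) := {x | ρ < ‖x‖} with hS
  have hSm : MeasurableSet S := measurableSet_lt measurable_const measurable_norm
  set g : EuclideanSpace ℝ (Fin n) → ℝ≥0∞ :=
    S.indicator (fun x => ENNReal.ofReal (‖x‖ ^ (α - (n:ℝ))) * ENNReal.ofReal |Ω (x - y) - Ω x|)
    with hg_def
  have hg : Measurable g := by
    refine Measurable.indicator ?_ hSm
    exact (((measurable_rpow_const (α - (n:ℝ))).comp measurable_norm).ennreal_ofReal).mul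
      (((hΩm.comp (measurable_id.sub measurable_const)).sub hΩm).abs.ennreal_ofReal)
  set B : ℝ → ℝ≥0∞ := fun r => ENNReal.ofReal (r ^ (α - 1)) * omegaMod n Ω (‖y‖ / r) with hB
  have step3 : ∀ r ∈ Ioi (0:ℝ),
      ENNReal.ofReal (r ^ (n-1)) * (∫⁻ ξ : sphere (0:EuclideanSpace ℝ (Fin n)) 1,
          g (r • (ξ:EuclideanSpace ℝ (Fin n)))
          ∂(volume : Measure (EuclideanSpace ℝ (Fin n))).toSphere)
        ≤ (Ioi ρ).indicator B r := by
    intro r hr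
    rw [mem_Ioi] at hr
    have hnorm : ∀ ξ : sphere (0:EuclideanSpace ℝ (Fin n)) 1,
        ‖r • (ξ:EuclideanSpace ℝ (Fin n))‖ = r := fun ξ => by
      rw [norm_smul, mem_sphere_zero_iff_norm.1 ξ.2, mul_one, Real.norm_eq_abs, abs_of_pos hr]
    by_cases hρr : ρ < r
    · rw [indicator_of_mem (mem_Ioi.2 hρr)]
      have hgval : ∀ ξ : sphere (0:EuclideanSpace ℝ (Fin n)) 1,
          g (r • (ξ:EuclideanSpace ℝ (Fin n))) =
            ENNReal.ofReal (r ^ (α - (n:ℝ))) *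
              ENNReal.ofReal |Ω ((ξ:EuclideanSpace ℝ (Fin n)) + -(r⁻¹ • y)) -
                Ω (ξ:EuclideanSpace ℝ (Fin n))| := by
        intro ξ
        have hmem : (r • (ξ:EuclideanSpace ℝ (Fin n))) ∈ S := by
          rw [hS, mem_setOf_eq, hnorm]; exact hρr
        have e1 : Ω (r • (ξ:EuclideanSpace ℝ (Fin n)) - y) =
            Ω ((ξ:EuclideanSpace ℝ (Fin n)) + -(r⁻¹ • y)) := by
          rw [← hΩhom r hr ((ξ:EuclideanSpace ℝ (Fin n)) + -(r⁻¹ • y))]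
          congr 1
          rw [smul_add, smul_neg, smul_inv_smul₀ hr.ne', sub_eq_add_neg]
        have e2 : Ω (r • (ξ:EuclideanSpace ℝ (Fin n))) = Ω (ξ:EuclideanSpace ℝ (Fin n)) :=
          hΩhom r hr _
        rw [hg_def, indicator_of_mem hmem, hnorm, e1, e2]
      have hωle : (∫⁻ ξ : sphere (0:EuclideanSpace ℝ (Fin n)) 1,
          ENNReal.ofReal |Ω ((ξ:EuclideanSpace ℝ (Fin n)) + -(r⁻¹ • y)) -
            Ω (ξ:EuclideanSpace ℝ (Fin n))|
          ∂(volume : Measure (EuclideanSpace ℝ (Fin n))).toSphere) ≤ omegaMod n Ω (‖y‖ / r) := by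
        refine sphere_le_omegaMod _ (le_of_eq ?_)
        rw [norm_neg, norm_smul, norm_inv, Real.norm_eq_abs, abs_of_pos hr, div_eq_inv_mul]
      calc ENNReal.ofReal (r ^ (n-1)) * (∫⁻ ξ : sphere (0:EuclideanSpace ℝ (Fin n)) 1,
              g (r • (ξ:EuclideanSpace ℝ (Fin n)))
              ∂(volume : Measure (EuclideanSpace ℝ (Fin n))).toSphere)
          = ENNReal.ofReal (r ^ (n-1)) * (ENNReal.ofReal (r ^ (α - (n:ℝ))) *
              ∫⁻ ξ : sphere (0:EuclideanSpace ℝ (Fin n)) 1,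
                ENNReal.ofReal |Ω ((ξ:EuclideanSpace ℝ (Fin n)) + -(r⁻¹ • y)) -
                  Ω (ξ:EuclideanSpace ℝ (Fin n))|
                ∂(volume : Measure (EuclideanSpace ℝ (Fin n))).toSphere) := by
            rw [lintegral_congr hgval, lintegral_const_mul' _ _ ENNReal.ofReal_ne_top]
        _ ≤ ENNReal.ofReal (r ^ (n-1)) * (ENNReal.ofReal (r ^ (α - (n:ℝ))) *
              omegaMod n Ω (‖y‖ / r)) := mul_le_mul' le_rfl (mul_le_mul' le_rfl hωle)
        _ = B r := by
            rw [hB, ← mul_assoc, ← ENNReal.ofReal_mul (by positivity)]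
            congr 2
            rw [← Real.rpow_natCast r (n-1), Nat.cast_sub hn, ← Real.rpow_add hr]
            norm_num
    · rw [indicator_of_notMem (fun hmem => hρr (mem_Ioi.1 hmem))]
      have hz : ∀ ξ : sphere (0:EuclideanSpace ℝ (Fin n)) 1,
          g (r • (ξ:EuclideanSpace ℝ (Fin n))) = 0 := by
        intro ξ
        rw [hg_def, indicator_of_notMem]
        rw [hS, mem_setOf_eq, hnorm]; exact hρr
      rw [lintegral_congr hz, lintegral_zero, mul_zero]
  set c : ℝ := ‖y‖ / ρ with hc
  have hc0 : 0 < c := div_pos ha hρ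
  set f : ℝ → ℝ := fun s => ‖y‖ / s with hf
  set f' : ℝ → ℝ := fun s => ‖y‖ * -(s^2)⁻¹ with hf'
  have himg : f '' Ioo 0 c = Ioi ρ := by
    ext r
    constructor
    · rintro ⟨s, ⟨hs0, hsc⟩, rfl⟩
      have : s * ρ < ‖y‖ := (lt_div_iff₀ hρ).1 hsc
      exact mem_Ioi.2 ((lt_div_iff₀ hs0).2 (by rw [mul_comm]; exact this))
    · intro hr
      rw [mem_Ioi] at hr
      have hr0 : 0 < r := hρ.trans hr
      refine ⟨‖y‖ / r, ⟨by positivity, div_lt_div_of_pos_left ha hρ hr⟩, ?_⟩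
      rw [hf]
      field_simp
  have hderiv : ∀ s ∈ Ioo (0:ℝ) c, HasDerivWithinAt f (f' s) (Ioo 0 c) s := by
    intro s hs
    have : HasDerivAt (fun x : ℝ => ‖y‖ * x⁻¹) (‖y‖ * -(s^2)⁻¹) s :=
      (hasDerivAt_inv hs.1.ne').const_mul ‖y‖
    have heq : f = fun x : ℝ => ‖y‖ * x⁻¹ := funext fun x => div_eq_mul_inv _ _
    rw [heq]
    exact this.hasDerivWithinAt
  have hinj : InjOn f (Ioo 0 c) := by
    intro s₁ h₁ s₂ h₂ he
    rw [hf] at he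
    dsimp only at he
    rw [div_eq_div_iff h₁.1.ne' h₂.1.ne'] at he
    exact (mul_left_cancel₀ ha.ne' he).symm
  have step5 : (∫⁻ r in Ioi ρ, B r)
      = ENNReal.ofReal (‖y‖ ^ α) *
        ∫⁻ s in Ioo (0:ℝ) c, omegaMod n Ω s / ENNReal.ofReal (s ^ (1 + α)) := by
    rw [← himg, _root_.lintegral_image_eq_lintegral_abs_deriv_mul measurableSet_Ioo hderiv hinj B,
      ← lintegral_const_mul' _ _ ENNReal.ofReal_ne_top]
    refine setLIntegral_congr_fun measurableSet_Ioo (fun s hs => ?_)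
    have hs0 : 0 < s := hs.1
    have h1 : ‖y‖ / (‖y‖ / s) = s := by field_simp
    have h2 : |f' s| = ‖y‖ * (s^2)⁻¹ := by
      rw [hf', abs_mul, abs_of_pos ha, abs_neg, abs_inv, abs_of_pos (by positivity)]
    have h3 : (‖y‖ / s : ℝ) ^ (α - 1) = ‖y‖ ^ (α - 1) / s ^ (α - 1) :=
      Real.div_rpow ha.le hs0.le _
    have h4 : ‖y‖ * (s^2)⁻¹ * (‖y‖ ^ (α - 1) / s ^ (α - 1)) = ‖y‖ ^ α / s ^ (1 + α) := by
      have e1 : ‖y‖ ^ α = ‖y‖ * ‖y‖ ^ (α - 1) := by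
        nth_rewrite 1 [show α = 1 + (α - 1) by ring]
        rw [Real.rpow_add ha, Real.rpow_one]
      have e2 : s ^ (1 + α) = s ^ 2 * s ^ (α - 1) := by
        nth_rewrite 1 [show (1:ℝ) + α = ((2:ℕ):ℝ) + (α - 1) by push_cast; ring]
        rw [Real.rpow_add hs0, Real.rpow_natCast]
      have hsne : (s:ℝ) ^ 2 ≠ 0 := by positivity
      have hsne' : (s:ℝ) ^ (α - 1) ≠ 0 := (Real.rpow_pos_of_pos hs0 _).ne'
      rw [e1, e2]
      field_simp
    rw [hB, hf]
    dsimp only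
    rw [h1, h2, h3, ← mul_assoc, ← ENNReal.ofReal_mul (by positivity), h4,
      ENNReal.ofReal_div_of_pos (Real.rpow_pos_of_pos hs0 _), div_eq_mul_inv,
      div_eq_mul_inv, mul_right_comm, mul_assoc]
  calc (∫⁻ x in S, ENNReal.ofReal (‖x‖ ^ (α - (n:ℝ))) * ENNReal.ofReal |Ω (x - y) - Ω x| ∂volume)
      = ∫⁻ x, g x ∂volume := (lintegral_indicator hSm _).symm
    _ = ∫⁻ r in Ioi (0:ℝ), ENNReal.ofReal (r ^ (n-1)) *
          ∫⁻ ξ : sphere (0:EuclideanSpace ℝ (Fin n)) 1, g (r • (ξ:EuclideanSpace ℝ (Fin n)))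
            ∂(volume : Measure (EuclideanSpace ℝ (Fin n))).toSphere ∂volume :=
        lintegral_polar hn g hg
    _ ≤ ∫⁻ r in Ioi (0:ℝ), (Ioi ρ).indicator B r ∂volume :=
        lintegral_mono_ae ((ae_restrict_iff' measurableSet_Ioi).2 (ae_of_all _ step3))
    _ = ∫⁻ r in Ioi ρ, B r := by
        rw [lintegral_indicator measurableSet_Ioi, Measure.restrict_restrict measurableSet_Ioi,
          inter_eq_left.2 (Ioi_subset_Ioi hρ.le)]
    _ = ENNReal.ofReal (‖y‖ ^ α) *
          ∫⁻ s in Ioo (0:ℝ) c, omegaMod n Ω s / ENNReal.ofReal (s ^ (1 + α)) := step5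

end Key

section Main

variable {n : ℕ} {Ω : EuclideanSpace ℝ (Fin n) → ℝ}

lemma part1 (α : ℝ) (hα0 : 0 ≤ α) (hαn : α < n)
    (hΩm : Measurable Ω)
    (hΩhom : ∀ s : ℝ, 0 < s → ∀ x : EuclideanSpace ℝ (Fin n), Ω (s • x) = Ω x)
    (rt : ℝ) (V : Measure (EuclideanSpace ℝ (Fin n)))
    (hV : IsProbabilityMeasure V) (hVc : V (closedBall (0:EuclideanSpace ℝ (Fin n)) rt)ᶜ = 0)
    (ρ : ℝ) (hρ : 0 < ρ) (l : ℝ) (hl : 0 < l) :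
    volume {x : EuclideanSpace ℝ (Fin n) | ρ < ‖x‖ ∧
        ENNReal.ofReal l <
          ENNReal.ofReal (‖x‖ ^ (α - (n:ℝ))) * ∫⁻ y, ENNReal.ofReal |Ω (x - y) - Ω x| ∂V}
      ≤ (ENNReal.ofReal l)⁻¹ *
          ⨆ (y : EuclideanSpace ℝ (Fin n)) (_ : y ∈ closedBall (0:EuclideanSpace ℝ (Fin n)) rt),
            ENNReal.ofReal (‖y‖ ^ α) *
              ∫⁻ s in Set.Ioo (0:ℝ) (‖y‖ / ρ), omegaMod n Ω s / ENNReal.ofReal (s ^ (1 + α)) := by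
  have hK : Measurable (fun p : EuclideanSpace ℝ (Fin n) × EuclideanSpace ℝ (Fin n) =>
      ENNReal.ofReal |Ω (p.1 - p.2) - Ω p.1|) :=
    ((hΩm.comp (measurable_fst.sub measurable_snd)).sub (hΩm.comp measurable_fst)).abs.ennreal_ofReal
  set f : EuclideanSpace ℝ (Fin n) → ℝ≥0∞ :=
    fun x => ENNReal.ofReal (‖x‖ ^ (α - (n:ℝ))) * ∫⁻ y, ENNReal.ofReal |Ω (x - y) - Ω x| ∂V
    with hf_def
  have hf : Measurable f := by
    refine (((measurable_rpow_const _).comp measurable_norm).ennreal_ofReal).mul ?_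
    exact hK.lintegral_prod_right'
  set S : Set (EuclideanSpace ℝ (Fin n)) := {x | ρ < ‖x‖} with hS
  have hSm : MeasurableSet S := measurableSet_lt measurable_const measurable_norm
  set Sup : ℝ≥0∞ :=
    ⨆ (y : EuclideanSpace ℝ (Fin n)) (_ : y ∈ closedBall (0:EuclideanSpace ℝ (Fin n)) rt),
      ENNReal.ofReal (‖y‖ ^ α) *
        ∫⁻ s in Set.Ioo (0:ℝ) (‖y‖ / ρ), omegaMod n Ω s / ENNReal.ofReal (s ^ (1 + α))
    with hSup
  have hl0 : (ENNReal.ofReal l) ≠ 0 := (ENNReal.ofReal_pos.2 hl).ne'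
  have h1 : volume {x : EuclideanSpace ℝ (Fin n) | ρ < ‖x‖ ∧ ENNReal.ofReal l < f x}
      ≤ (volume.restrict S) {x | ENNReal.ofReal l ≤ f x} := by
    rw [Measure.restrict_apply (measurableSet_le measurable_const hf)]
    refine measure_mono ?_
    rintro x ⟨hx1, hx2⟩
    exact ⟨hx2.le, hx1⟩
  have h2 := mul_meas_ge_le_lintegral₀ (μ := volume.restrict S) hf.aemeasurable
    (ENNReal.ofReal l)
  have h3 : (∫⁻ x in S, f x ∂volume) ≤ Sup := by
    have hunc : Measurable (fun p : EuclideanSpace ℝ (Fin n) × EuclideanSpace ℝ (Fin n) =>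
        ENNReal.ofReal (‖p.1‖ ^ (α - (n:ℝ))) * ENNReal.ofReal |Ω (p.1 - p.2) - Ω p.1|) :=
      (((measurable_rpow_const _).comp (measurable_norm.comp measurable_fst)).ennreal_ofReal).mul hK
    have swap : (∫⁻ x in S, f x ∂volume) = ∫⁻ y, ∫⁻ x in S,
        ENNReal.ofReal (‖x‖ ^ (α - (n:ℝ))) * ENNReal.ofReal |Ω (x - y) - Ω x| ∂volume ∂V := by
      calc (∫⁻ x in S, f x ∂volume)
          = ∫⁻ x in S, ∫⁻ y, ENNReal.ofReal (‖x‖ ^ (α - (n:ℝ))) *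
              ENNReal.ofReal |Ω (x - y) - Ω x| ∂V ∂volume := by
            refine lintegral_congr fun x => ?_
            exact (lintegral_const_mul' _ _ ENNReal.ofReal_ne_top).symm
        _ = _ := lintegral_lintegral_swap hunc.aemeasurable
    rw [swap]
    set F : EuclideanSpace ℝ (Fin n) → ℝ≥0∞ := fun y => ∫⁻ x in S,
        ENNReal.ofReal (‖x‖ ^ (α - (n:ℝ))) * ENNReal.ofReal |Ω (x - y) - Ω x| ∂volume with hF
    have hsplit : (∫⁻ y, F y ∂V) =
        ∫⁻ y in closedBall (0:EuclideanSpace ℝ (Fin n)) rt, F y ∂V := by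
      rw [← lintegral_add_compl F (measurableSet_closedBall
        (x := (0:EuclideanSpace ℝ (Fin n))) (ε := rt)), setLIntegral_measure_zero _ _ hVc,
        add_zero]
    rw [hsplit]
    calc (∫⁻ y in closedBall (0:EuclideanSpace ℝ (Fin n)) rt, F y ∂V)
        ≤ ∫⁻ _ in closedBall (0:EuclideanSpace ℝ (Fin n)) rt, Sup ∂V := by
          refine lintegral_mono_ae ((ae_restrict_iff' measurableSet_closedBall).2
            (ae_of_all _ fun y hy => ?_))
          by_cases hy0 : y = 0
          · subst hy0
            have : F 0 = 0 := by
              rw [hF]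
              simp only [sub_zero, sub_self, abs_zero, ENNReal.ofReal_zero, mul_zero]
              exact lintegral_zero
            rw [this]
            exact zero_le
          · exact (key_estimate α hα0 hαn hΩhom hΩm y hy0 hρ).trans
              (le_iSup₂_of_le y hy le_rfl)
      _ = Sup * V (closedBall (0:EuclideanSpace ℝ (Fin n)) rt) := setLIntegral_const _ _
      _ ≤ Sup * 1 := mul_le_mul' le_rfl prob_le_one
      _ = Sup := mul_one _
  calc volume {x : EuclideanSpace ℝ (Fin n) | ρ < ‖x‖ ∧ ENNReal.ofReal l < f x}
      ≤ (volume.restrict S) {x | ENNReal.ofReal l ≤ f x} := h1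
    _ = (ENNReal.ofReal l)⁻¹ *
          (ENNReal.ofReal l * (volume.restrict S) {x | ENNReal.ofReal l ≤ f x}) := by
        rw [← mul_assoc, ENNReal.inv_mul_cancel hl0 ENNReal.ofReal_ne_top, one_mul]
    _ ≤ (ENNReal.ofReal l)⁻¹ * ∫⁻ x in S, f x ∂volume := mul_le_mul' le_rfl h2
    _ ≤ (ENNReal.ofReal l)⁻¹ * Sup := mul_le_mul' le_rfl h3

end Main

/-- Chebyshev estimate for a probability measure `V` supported in `B(0, r_t)`, under the
`L¹_α`-Dini condition: the measure of the set where
`|x|^{α-n} ∫ |Ω(x-y) - Ω(x)| dV(y) > λ` on `{|x| > ρ}` is at most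
`(1/λ) sup_{y ∈ B(0,r_t)} |y|^α ∫₀^{|y|/ρ} ω(s)/s^{1+α} ds`, and for any family of probability
measures supported in `B(0,t)` this measure tends to `0` as `t → 0⁺`. -/
theorem stmt_13 {n : ℕ} (α : ℝ) (hα0 : 0 ≤ α) (hαn : α < n)
    (Ω : EuclideanSpace ℝ (Fin n) → ℝ) (hΩm : Measurable Ω)
    (hΩhom : ∀ s : ℝ, 0 < s → ∀ x : EuclideanSpace ℝ (Fin n), Ω (s • x) = Ω x)
    (hDini : (∫⁻ s in Set.Ioo (0:ℝ) 1, omegaMod n Ω s / ENNReal.ofReal (s ^ (1 + α))) < ⊤) :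
    (∀ rt : ℝ, 0 < rt → ∀ V : Measure (EuclideanSpace ℝ (Fin n)),
      IsProbabilityMeasure V → V (closedBall (0:EuclideanSpace ℝ (Fin n)) rt)ᶜ = 0 →
      ∀ ρ : ℝ, 0 < ρ → ∀ l : ℝ, 0 < l →
        volume {x : EuclideanSpace ℝ (Fin n) | ρ < ‖x‖ ∧
            ENNReal.ofReal l <
              ENNReal.ofReal (‖x‖ ^ (α - (n:ℝ))) * ∫⁻ y, ENNReal.ofReal |Ω (x - y) - Ω x| ∂V}
          ≤ (ENNReal.ofReal l)⁻¹ *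
              ⨆ (y : EuclideanSpace ℝ (Fin n)) (_ : y ∈ closedBall (0:EuclideanSpace ℝ (Fin n)) rt),
                ENNReal.ofReal (‖y‖ ^ α) *
                  ∫⁻ s in Set.Ioo (0:ℝ) (‖y‖ / ρ), omegaMod n Ω s / ENNReal.ofReal (s ^ (1 + α))) ∧
    (∀ W : ℝ → Measure (EuclideanSpace ℝ (Fin n)),
      (∀ t : ℝ, 0 < t → IsProbabilityMeasure (W t) ∧
        W t (closedBall (0:EuclideanSpace ℝ (Fin n)) t)ᶜ = 0) →
      ∀ ρ : ℝ, 0 < ρ → ∀ l : ℝ, 0 < l →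
        Tendsto (fun t : ℝ =>
            volume {x : EuclideanSpace ℝ (Fin n) | ρ < ‖x‖ ∧
              ENNReal.ofReal l <
                ENNReal.ofReal (‖x‖ ^ (α - (n:ℝ))) *
                  ∫⁻ y, ENNReal.ofReal |Ω (x - y) - Ω x| ∂(W t)})
          (𝓝[>] (0:ℝ)) (𝓝 0)) := by
  constructor
  · intro rt _ V hV hVc ρ hρ l hl
    exact part1 α hα0 hαn hΩm hΩhom rt V hV hVc ρ hρ l hl
  · intro W hW ρ hρ l hl
    set h : ℝ → ℝ≥0∞ := fun s => omegaMod n Ω s / ENNReal.ofReal (s ^ (1 + α)) with hh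
    set ν : Measure ℝ := volume.withDensity h with hν
    have hm : ∀ c : ℝ, (∫⁻ s in Ioo (0:ℝ) c, h s) = ν (Ioo 0 c) := fun c =>
      (withDensity_apply h measurableSet_Ioo).symm
    have hν1 : ν (Ioo 0 1) ≠ ⊤ := by rw [← hm]; exact hDini.ne
    have hl0 : (ENNReal.ofReal l) ≠ 0 := (ENNReal.ofReal_pos.2 hl).ne'
    rw [ENNReal.tendsto_nhds_zero]
    intro ε hε
    have hseq : Tendsto (fun k : ℕ => ν (Ioo 0 (1/(k+1:ℝ)))) atTop (𝓝 0) := by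
      have h0 : (⋂ k : ℕ, Ioo (0:ℝ) (1/(k+1:ℝ))) = ∅ := by
        ext x
        simp only [mem_iInter, mem_Ioo, mem_empty_iff_false, iff_false, not_forall]
        by_cases hx : 0 < x
        · obtain ⟨k, hk⟩ := exists_nat_one_div_lt hx
          exact ⟨k, fun hc => absurd hc.2 (not_lt.2 hk.le)⟩
        · exact ⟨0, fun hc => hx hc.1⟩
      have hanti : Antitone (fun k : ℕ => Ioo (0:ℝ) (1/(k+1:ℝ))) := by
        intro k m hkm
        refine Ioo_subset_Ioo le_rfl (one_div_le_one_div_of_le (by positivity) ?_)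
        exact_mod_cast Nat.succ_le_succ hkm
      have := tendsto_measure_iInter_atTop (μ := ν)
        (fun k : ℕ => measurableSet_Ioo.nullMeasurableSet) hanti
        ⟨0, by simpa using hν1⟩
      rw [h0] at this
      simpa [Function.comp_def] using this
    have hεl : (0:ℝ≥0∞) < ε * ENNReal.ofReal l :=
      ENNReal.mul_pos hε.ne' hl0
    obtain ⟨k, hk⟩ := (hseq.eventually_lt_const hεl).exists
    set c : ℝ := 1/(k+1:ℝ) with hcdef
    have hc0 : 0 < c := by positivity
    have hδ0 : 0 < min (min ρ 1) (ρ * c) := lt_min (lt_min hρ one_pos) (by positivity)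
    filter_upwards [Ioc_mem_nhdsGT hδ0] with t ht
    obtain ⟨hW1, hW2⟩ := hW t ht.1
    refine (part1 α hα0 hαn hΩm hΩhom t (W t) hW1 hW2 ρ hρ l hl).trans ?_
    have hSup : (⨆ (y : EuclideanSpace ℝ (Fin n))
        (_ : y ∈ closedBall (0:EuclideanSpace ℝ (Fin n)) t),
          ENNReal.ofReal (‖y‖ ^ α) *
            ∫⁻ s in Set.Ioo (0:ℝ) (‖y‖ / ρ), omegaMod n Ω s / ENNReal.ofReal (s ^ (1 + α)))
        ≤ ε * ENNReal.ofReal l := by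
      refine iSup₂_le fun y hy => ?_
      have hyn : ‖y‖ ≤ t := by rwa [mem_closedBall_zero_iff] at hy
      have hb1 : ENNReal.ofReal (‖y‖ ^ α) ≤ 1 := by
        rw [ENNReal.ofReal_le_one]
        exact Real.rpow_le_one (norm_nonneg y)
          (hyn.trans (ht.2.trans ((min_le_left _ _).trans (min_le_right ρ 1)))) hα0
      have hb2 : (∫⁻ s in Set.Ioo (0:ℝ) (‖y‖/ρ), h s) ≤ ν (Ioo 0 c) := by
        rw [hm]
        refine measure_mono (Ioo_subset_Ioo le_rfl ?_)
        rw [div_le_iff₀ hρ]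
        calc ‖y‖ ≤ t := hyn
          _ ≤ ρ * c := ht.2.trans (min_le_right _ _)
          _ = c * ρ := mul_comm _ _
      calc ENNReal.ofReal (‖y‖ ^ α) * ∫⁻ s in Set.Ioo (0:ℝ) (‖y‖/ρ), h s
          ≤ 1 * ν (Ioo 0 c) := mul_le_mul' hb1 hb2
        _ = ν (Ioo 0 c) := one_mul _
        _ ≤ ε * ENNReal.ofReal l := hk.le
    calc (ENNReal.ofReal l)⁻¹ * _ ≤ (ENNReal.ofReal l)⁻¹ * (ε * ENNReal.ofReal l) :=
          mul_le_mul' le_rfl hSup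
      _ = ε := by
          rw [mul_comm ε, ← mul_assoc, ENNReal.inv_mul_cancel hl0 ENNReal.ofReal_ne_top, one_mul]
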